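/- arXiv:2102.07149 — 2 statements merged into one kernel-verified Lean document; each statement's English description precedes it below -/
import Mathlib

section
/- Let p ≥ 1 and k ≥ 2, and let X_1, …, X_p ∈ span{e_1, …, e_k}, with X_m = ∑_{j=1}^k λ_{m,j} e_j. Then for every i with 2 ≤ i ≤ 2n: (R^p·ω)(X_1, e_k, X_2, e_k, …, X_p, e_k, e_i, e_k) = λ_{1,1}·λ_{2,1}·…·λ_{p,1} · ε^p α^p · ω(e_i, e_k). -/
noncomputable section

/-- Gauss-equation curvature `R(X,Y)Z = h(Y,Z)·S(X) − h(X,Z)·S(Y)`. -/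
def RR {V : Type*} [AddCommGroup V] [Module ℝ V]
    (h : V →ₗ[ℝ] V →ₗ[ℝ] ℝ) (S : V →ₗ[ℝ] V) (X Y Z : V) : V :=
  h Y Z • S X - h X Z • S Y

/-- One application of the curvature action on an `m`-linear form (encoded as a
function on lists of vectors): `(R·T)(X,Y,Z₁,…,Zₘ) = −∑ᵢ T(Z₁,…,R(X,Y)Zᵢ,…,Zₘ)`;
the two newest (leftmost) arguments are consumed. -/
def RAct {V : Type*} [AddCommGroup V] [Module ℝ V]
    (h : V →ₗ[ℝ] V →ₗ[ℝ] ℝ) (S : V →ₗ[ℝ] V) (T : List V → ℝ) : List V → ℝ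
  | X :: Y :: Zs =>
      -∑ i ∈ Finset.range Zs.length, T (Zs.set i (RR h S X Y (Zs.getD i 0)))
  | _ => 0

/-- `R^p · ω`, as a function on lists of vectors (of length `2p+2`):
`R⁰·ω = ω` and `R^p·ω = R·(R^{p−1}·ω)`. -/
def Rpow {V : Type*} [AddCommGroup V] [Module ℝ V]
    (h : V →ₗ[ℝ] V →ₗ[ℝ] ℝ) (S : V →ₗ[ℝ] V) (ω : V →ₗ[ℝ] V →ₗ[ℝ] ℝ) (p : ℕ) :
    List V → ℝ :=
  (RAct h S)^[p] (fun l => ω (l.getD 0 0) (l.getD 1 0))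

/-- The list `X, Y, X, Y, …` with `p` pairs `(X, Y)`. -/
def pairList {V : Type*} (X Y : V) : ℕ → List V
  | 0 => []
  | p + 1 => X :: Y :: pairList X Y p

/-- The list `f 1, y, f 2, y, …, f p, y`. -/
def interleave {V : Type*} (f : ℕ → V) (y : V) : ℕ → List V
  | 0 => []
  | p + 1 => interleave f y p ++ [f (p + 1), y]


def lst {V : Type*} [AddCommGroup V] [Module ℝ V] (ek : V) :
    (ℕ → V) → (ℕ → ℝ) → V → ℝ → ℕ → List V
  | _, c, W, d, 0 => [W, d • ek]
  | Y, c, W, d, q + 1 =>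
      Y 1 :: c 1 • ek :: lst ek (fun m => Y (m + 1)) (fun m => c (m + 1)) W d q

lemma lst_length {V : Type*} [AddCommGroup V] [Module ℝ V] (ek : V) :
    ∀ (q : ℕ) (Y : ℕ → V) (c : ℕ → ℝ) (W : V) (d : ℝ),
      (lst ek Y c W d q).length = 2 * q + 2
  | 0, Y, c, W, d => rfl
  | q + 1, Y, c, W, d => by
      simp [lst, lst_length ek q]
      ring

lemma lst_congr {V : Type*} [AddCommGroup V] [Module ℝ V] (ek : V) :
    ∀ (q : ℕ) (Y Y' : ℕ → V) (c c' : ℕ → ℝ) (W : V) (d : ℝ),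
      (∀ m, 1 ≤ m → m ≤ q → Y m = Y' m) → (∀ m, 1 ≤ m → m ≤ q → c m = c' m) →
      lst ek Y c W d q = lst ek Y' c' W d q
  | 0, Y, Y', c, c', W, d, _, _ => rfl
  | q + 1, Y, Y', c, c', W, d, hY, hc => by
      rw [lst, lst, hY 1 le_rfl (by omega), hc 1 le_rfl (by omega),
        lst_congr ek q (fun m => Y (m + 1)) (fun m => Y' (m + 1))
          (fun m => c (m + 1)) (fun m => c' (m + 1)) W d
          (fun m h1 h2 => hY (m + 1) (by omega) (by omega))
          (fun m h1 h2 => hc (m + 1) (by omega) (by omega))]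

def Kv {V : Type*} [AddCommGroup V] [Module ℝ V]
    (h ω : V →ₗ[ℝ] V →ₗ[ℝ] ℝ) (ek : V) (α : ℝ)
    (Y : ℕ → V) (c : ℕ → ℝ) (W : V) (d : ℝ) (q : ℕ) : ℝ :=
  (∏ m ∈ Finset.range q, (c (m + 1) * h ek (Y (m + 1)))) * (d * (α ^ q * ω W ek))

lemma Rpow_succ {V : Type*} [AddCommGroup V] [Module ℝ V]
    (h : V →ₗ[ℝ] V →ₗ[ℝ] ℝ) (S : V →ₗ[ℝ] V) (ω : V →ₗ[ℝ] V →ₗ[ℝ] ℝ) (p : ℕ) :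
    Rpow h S ω (p + 1) = RAct h S (Rpow h S ω p) := by
  simp [Rpow, Function.iterate_succ_apply']

lemma interleave_succ {V : Type*} (f : ℕ → V) (y : V) :
    ∀ p, interleave f y (p + 1) = f 1 :: y :: interleave (fun m => f (m + 1)) y p
  | 0 => rfl
  | p + 1 => by
      rw [show interleave f y (p+1+1) = interleave f y (p+1) ++ [f (p+2), y] from rfl,
        interleave_succ f y p]
      simp [interleave]

lemma interleave_lst {V : Type*} [AddCommGroup V] [Module ℝ V] :
    ∀ (p : ℕ) (f : ℕ → V) (y w : V),
      interleave f y p ++ [w, y] = lst y f (fun _ => (1:ℝ)) w 1 p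
  | 0, f, y, w => by simp [interleave, lst]
  | p + 1, f, y, w => by
      rw [interleave_succ, lst, ← interleave_lst p (fun m => f (m+1)) y w]
      simp

section Main

variable {V : Type*} [AddCommGroup V] [Module ℝ V]
variable (h ω : V →ₗ[ℝ] V →ₗ[ℝ] ℝ) (S : V →ₗ[ℝ] V) (ek : V) (α : ℝ) (U : Submodule ℝ V)

lemma RR_ek (hSek : S ek = α • ek) (X Z : V) (b : ℝ) :
    RR h S X (b • ek) Z = (b * h ek Z) • S X - (b * α * h X Z) • ek := by
  simp only [RR, map_smul, LinearMap.smul_apply, hSek, smul_smul, smul_eq_mul]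
  module

lemma RR_ek_smul (hSek : S ek = α • ek) (hkk : h ek ek = 0) (X : V) (b s : ℝ) :
    RR h S X (b • ek) (s • ek) = (-(b * s * α * h X ek)) • ek := by
  rw [RR_ek h S ek α hSek]
  simp [hkk]
  module

lemma RR_ek_W (hSek : S ek = α • ek) (X W : V) (hW : h ek W = 0) (b : ℝ) :
    RR h S X (b • ek) W = (-(b * α * h X W)) • ek := by
  rw [RR_ek h S ek α hSek, hW]
  module

end Main

section Main2

variable {V : Type*} [AddCommGroup V] [Module ℝ V]
variable (h ω : V →ₗ[ℝ] V →ₗ[ℝ] ℝ) (S : V →ₗ[ℝ] V) (ek : V) (α : ℝ) (U : Submodule ℝ V)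

lemma slot (hUek : ek ∈ U) (hSU : ∀ u ∈ U, S u ∈ U)
    (hkk : h ek ek = 0) (hSek : S ek = α • ek) :
    ∀ (q : ℕ) (Y : ℕ → V) (c : ℕ → ℝ) (W : V) (d : ℝ),
      (∀ m, 1 ≤ m → m ≤ q → Y m ∈ U) → h ek W = 0 →
      ∀ X, X ∈ U → ∀ (b : ℝ) (j : ℕ), j < 2 * q + 2 →
      ∃ Y' c' W' d', (∀ m, 1 ≤ m → m ≤ q → Y' m ∈ U) ∧ h ek W' = 0 ∧
        (lst ek Y c W d q).set j (RR h S X (b • ek) ((lst ek Y c W d q).getD j 0))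
          = lst ek Y' c' W' d' q := by
  intro q
  induction q with
  | zero =>
    intro Y c W d hY hW X hX b j hj
    interval_cases j
    · refine ⟨Y, c, (-(b * α * h X W)) • ek, d, hY, ?_, ?_⟩
      · simp [hkk]
      · show (lst ek Y c W d 0).set 0 _ = _
        rw [show (lst ek Y c W d 0).getD 0 0 = W from rfl, RR_ek_W h S ek α hSek X W hW]
        rfl
    · refine ⟨Y, c, W, -(b * d * α * h X ek), hY, hW, ?_⟩
      show (lst ek Y c W d 0).set 1 _ = _
      rw [show (lst ek Y c W d 0).getD 1 0 = d • ek from rfl,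
        RR_ek_smul h S ek α hSek hkk X b d]
      show [W, (-(b * d * α * h X ek)) • ek] = [W, (-(b * d * α * h X ek)) • ek]
      rfl
  | succ q IH =>
    intro Y c W d hY hW X hX b j hj
    match j, hj with
    | 0, _ =>
      refine ⟨fun m => if m = 1 then RR h S X (b • ek) (Y 1) else Y m, c, W, d, ?_, hW, ?_⟩
      · intro m h1 h2
        by_cases hm : m = 1
        · simp only [hm, if_pos rfl]
          rw [RR_ek h S ek α hSek]
          exact sub_mem (Submodule.smul_mem _ _ (hSU X hX)) (Submodule.smul_mem _ _ hUek)
        · simpa [hm] using hY m h1 h2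
      · show (lst ek Y c W d (q+1)).set 0 _ = _
        rw [show (lst ek Y c W d (q+1)).getD 0 0 = Y 1 from rfl]
        rw [show lst ek Y c W d (q+1)
            = Y 1 :: c 1 • ek :: lst ek (fun m => Y (m+1)) (fun m => c (m+1)) W d q from rfl]
        rw [show lst ek (fun m => if m = 1 then RR h S X (b • ek) (Y 1) else Y m) c W d (q+1)
            = (if (1:ℕ) = 1 then RR h S X (b • ek) (Y 1) else Y 1) :: c 1 • ek ::
              lst ek (fun m => if m + 1 = 1 then RR h S X (b • ek) (Y 1) else Y (m+1))
                (fun m => c (m+1)) W d q from rfl]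
        simp only [if_pos rfl, List.set]
        congr 2
        exact lst_congr ek q _ _ _ _ W d (fun m h1 h2 => by simp [Nat.succ_ne_zero, show m + 1 ≠ 1 by omega, show m ≠ 0 by omega]) (fun _ _ _ => rfl)
    | 1, _ =>
      refine ⟨Y, fun m => if m = 1 then -(b * c 1 * α * h X ek) else c m, W, d, hY, hW, ?_⟩
      show (lst ek Y c W d (q+1)).set 1 _ = _
      rw [show (lst ek Y c W d (q+1)).getD 1 0 = c 1 • ek from rfl,
        RR_ek_smul h S ek α hSek hkk X b (c 1)]
      rw [show lst ek Y c W d (q+1)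
          = Y 1 :: c 1 • ek :: lst ek (fun m => Y (m+1)) (fun m => c (m+1)) W d q from rfl]
      rw [show lst ek Y (fun m => if m = 1 then -(b * c 1 * α * h X ek) else c m) W d (q+1)
          = Y 1 :: (if (1:ℕ) = 1 then -(b * c 1 * α * h X ek) else c 1) • ek ::
            lst ek (fun m => Y (m+1))
              (fun m => if m + 1 = 1 then -(b * c 1 * α * h X ek) else c (m+1)) W d q from rfl]
      simp only [if_pos rfl, List.set]
      congr 2
      exact lst_congr ek q _ _ _ _ W d (fun _ _ _ => rfl) (fun m h1 h2 => by simp [show m + 1 ≠ 1 by omega, show m ≠ 0 by omega])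
    | (j + 2), hj =>
      obtain ⟨Y', c', W', d', hY', hW', heq⟩ :=
        IH (fun m => Y (m+1)) (fun m => c (m+1)) W d
          (fun m h1 h2 => hY (m+1) (by omega) (by omega)) hW X hX b j (by omega)
      refine ⟨fun m => if m = 1 then Y 1 else Y' (m - 1),
        fun m => if m = 1 then c 1 else c' (m - 1), W', d', ?_, hW', ?_⟩
      · intro m h1 h2
        by_cases hm : m = 1
        · simp only [hm, if_pos rfl]; exact hY 1 le_rfl (by omega)
        · simp only [if_neg hm]; exact hY' (m - 1) (by omega) (by omega)
      · show (lst ek Y c W d (q+1)).set (j+2) _ = _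
        rw [show lst ek Y c W d (q+1)
            = Y 1 :: c 1 • ek :: lst ek (fun m => Y (m+1)) (fun m => c (m+1)) W d q from rfl]
        rw [show (Y 1 :: c 1 • ek :: lst ek (fun m => Y (m+1)) (fun m => c (m+1)) W d q).getD (j+2) 0
            = (lst ek (fun m => Y (m+1)) (fun m => c (m+1)) W d q).getD j 0 from rfl]
        rw [show (Y 1 :: c 1 • ek :: lst ek (fun m => Y (m+1)) (fun m => c (m+1)) W d q).set (j+2)
              (RR h S X (b • ek) ((lst ek (fun m => Y (m+1)) (fun m => c (m+1)) W d q).getD j 0))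
            = Y 1 :: c 1 • ek :: (lst ek (fun m => Y (m+1)) (fun m => c (m+1)) W d q).set j
              (RR h S X (b • ek) ((lst ek (fun m => Y (m+1)) (fun m => c (m+1)) W d q).getD j 0)) from rfl]
        rw [heq]
        rw [show lst ek (fun m => if m = 1 then Y 1 else Y' (m - 1))
              (fun m => if m = 1 then c 1 else c' (m - 1)) W' d' (q+1)
            = (if (1:ℕ) = 1 then Y 1 else Y' 0) ::
              (if (1:ℕ) = 1 then c 1 else c' 0) • ek ::
              lst ek (fun m => if m + 1 = 1 then Y 1 else Y' (m + 1 - 1))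
                (fun m => if m + 1 = 1 then c 1 else c' (m + 1 - 1)) W' d' q from rfl]
        simp only [if_pos rfl]
        congr 2
        exact (lst_congr ek q _ _ _ _ W' d'
          (fun m h1 h2 => by simp [show m + 1 ≠ 1 by omega, show m ≠ 0 by omega])
          (fun m h1 h2 => by simp [show m + 1 ≠ 1 by omega, show m ≠ 0 by omega])).symm

end Main2

def prep {A : Type*} (a : A) (f : ℕ → A) : ℕ → A
  | 0 => a
  | 1 => a
  | m + 2 => f (m + 1)

section Main3

variable {V : Type*} [AddCommGroup V] [Module ℝ V]
variable (h ω : V →ₗ[ℝ] V →ₗ[ℝ] ℝ) (S : V →ₗ[ℝ] V) (ek : V) (α : ℝ) (U : Submodule ℝ V)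

lemma Kv_succ (Y : ℕ → V) (c : ℕ → ℝ) (W : V) (d : ℝ) (q : ℕ) :
    Kv h ω ek α Y c W d (q + 1)
      = (c 1 * h ek (Y 1)) * (α * Kv h ω ek α (fun m => Y (m + 1)) (fun m => c (m + 1)) W d q) := by
  simp only [Kv, Finset.prod_range_succ']
  ring

lemma Kv_prep (a : V) (s : ℝ) (Y' : ℕ → V) (c' : ℕ → ℝ) (W' : V) (d' : ℝ) (q : ℕ) :
    Kv h ω ek α (prep a Y') (prep s c') W' d' (q + 1)
      = (s * h ek a) * (α * Kv h ω ek α Y' c' W' d' q) := by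
  simp only [Kv, Finset.prod_range_succ']
  have hprod : (∏ x ∈ Finset.range q, prep s c' (x + 1 + 1) * h ek (prep a Y' (x + 1 + 1)))
      = ∏ x ∈ Finset.range q, c' (x + 1) * h ek (Y' (x + 1)) :=
    Finset.prod_congr rfl (fun m _ => rfl)
  rw [hprod, show prep s c' (0 + 1) = s from rfl, show prep a Y' (0 + 1) = a from rfl]
  ring

lemma prep_cons (a : V) (s : ℝ) (Y' : ℕ → V) (c' : ℕ → ℝ) (W' : V) (d' : ℝ) (q : ℕ) :
    a :: s • ek :: lst ek Y' c' W' d' q = lst ek (prep a Y') (prep s c') W' d' (q + 1) := by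
  rw [show lst ek (prep a Y') (prep s c') W' d' (q + 1)
      = prep a Y' 1 :: prep s c' 1 • ek ::
        lst ek (fun m => prep a Y' (m + 1)) (fun m => prep s c' (m + 1)) W' d' q from rfl]
  rw [show prep s c' 1 = s from rfl, show prep a Y' 1 = a from rfl]
  congr 2
  exact (lst_congr ek q _ _ _ _ W' d'
    (fun m h1 _ => by match m, h1 with | m' + 1, _ => rfl)
    (fun m h1 _ => by match m, h1 with | m' + 1, _ => rfl)).symm

end Main3

section Main4

variable {V : Type*} [AddCommGroup V] [Module ℝ V]
variable (h ω : V →ₗ[ℝ] V →ₗ[ℝ] ℝ) (S : V →ₗ[ℝ] V) (ek : V) (α : ℝ) (U : Submodule ℝ V)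

lemma key_sum (hsymm : ∀ X Y, h X Y = h Y X) (hωkk : ω ek ek = 0)
    (hUek : ek ∈ U) (hSU : ∀ u ∈ U, S u ∈ U)
    (hhS : ∀ u ∈ U, h ek (S u) = α * h ek u)
    (hkk : h ek ek = 0) (hSek : S ek = α • ek) :
    ∀ q : ℕ,
      (∀ (Y : ℕ → V) (c : ℕ → ℝ) (W : V) (d : ℝ),
        (∀ m, 1 ≤ m → m ≤ q → Y m ∈ U) → h ek W = 0 →
        Rpow h S ω q (lst ek Y c W d q) = Kv h ω ek α Y c W d q) ∧
      (∀ (Y : ℕ → V) (c : ℕ → ℝ) (W : V) (d : ℝ),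
        (∀ m, 1 ≤ m → m ≤ q → Y m ∈ U) → h ek W = 0 →
        ∀ X, X ∈ U → ∀ b : ℝ,
        (∑ j ∈ Finset.range (2 * q + 2),
          Rpow h S ω q ((lst ek Y c W d q).set j
            (RR h S X (b • ek) ((lst ek Y c W d q).getD j 0))))
          = -(b * α * h ek X) * Kv h ω ek α Y c W d q) := by
  intro q
  induction q with
  | zero =>
    constructor
    · intro Y c W d _ _
      show ω W (d • ek) = Kv h ω ek α Y c W d 0
      simp [Kv]
    · intro Y c W d hY hW X hX b
      rw [show (2 : ℕ) * 0 + 2 = 2 from rfl, Finset.sum_range_succ, Finset.sum_range_one]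
      rw [show (lst ek Y c W d 0).getD 0 0 = W from rfl,
        show (lst ek Y c W d 0).getD 1 0 = d • ek from rfl,
        RR_ek_W h S ek α hSek X W hW, RR_ek_smul h S ek α hSek hkk X b d]
      show ω ((-(b * α * h X W)) • ek) (d • ek) + ω W ((-(b * d * α * h X ek)) • ek)
        = -(b * α * h ek X) * Kv h ω ek α Y c W d 0
      rw [hsymm X ek]
      simp [Kv, hωkk]
      ring
  | succ q IH =>
    obtain ⟨IHkey, IHsum⟩ := IH
    have key1 : ∀ (Y : ℕ → V) (c : ℕ → ℝ) (W : V) (d : ℝ),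
        (∀ m, 1 ≤ m → m ≤ q + 1 → Y m ∈ U) → h ek W = 0 →
        Rpow h S ω (q + 1) (lst ek Y c W d (q + 1)) = Kv h ω ek α Y c W d (q + 1) := by
      intro Y c W d hY hW
      rw [Rpow_succ]
      rw [show lst ek Y c W d (q + 1)
          = Y 1 :: c 1 • ek :: lst ek (fun m => Y (m + 1)) (fun m => c (m + 1)) W d q from rfl]
      rw [show RAct h S (Rpow h S ω q)
            (Y 1 :: c 1 • ek :: lst ek (fun m => Y (m + 1)) (fun m => c (m + 1)) W d q)
          = -∑ j ∈ Finset.range (lst ek (fun m => Y (m + 1)) (fun m => c (m + 1)) W d q).length,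
              Rpow h S ω q ((lst ek (fun m => Y (m + 1)) (fun m => c (m + 1)) W d q).set j
                (RR h S (Y 1) (c 1 • ek)
                  ((lst ek (fun m => Y (m + 1)) (fun m => c (m + 1)) W d q).getD j 0))) from rfl]
      rw [lst_length]
      rw [IHsum (fun m => Y (m + 1)) (fun m => c (m + 1)) W d
        (fun m h1 h2 => hY (m + 1) (by omega) (by omega)) hW
        (Y 1) (hY 1 le_rfl (by omega)) (c 1)]
      rw [Kv_succ]
      ring
    constructor
    · exact key1
    · intro Y c W d hY hW X hX b
      have hYs : ∀ m, 1 ≤ m → m ≤ q → Y (m + 1) ∈ U :=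
        fun m h1 h2 => hY (m + 1) (by omega) (by omega)
      have cons_eval : ∀ (a : V), a ∈ U → ∀ (s : ℝ) (Y' : ℕ → V) (c' : ℕ → ℝ) (W' : V) (d' : ℝ),
          (∀ m, 1 ≤ m → m ≤ q → Y' m ∈ U) → h ek W' = 0 →
          Rpow h S ω (q + 1) (a :: s • ek :: lst ek Y' c' W' d' q)
            = (s * h ek a) * (α * Rpow h S ω q (lst ek Y' c' W' d' q)) := by
        intro a ha s Y' c' W' d' hY' hW'
        rw [prep_cons, key1 (prep a Y') (prep s c') W' d'
          (fun m h1 h2 => by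
            match m, h1 with
            | 1, _ => exact ha
            | m' + 2, _ => exact hY' (m' + 1) (by omega) (by omega)) hW',
          IHkey Y' c' W' d' hY' hW', Kv_prep]
      -- now the sum
      rw [show 2 * (q + 1) + 2 = (2 * q + 2) + 1 + 1 from by ring]
      rw [Finset.sum_range_succ', Finset.sum_range_succ']
      -- f 0 term
      have hv0 : RR h S X (b • ek) (Y 1)
          = (b * h ek (Y 1)) • S X - (b * α * h X (Y 1)) • ek := RR_ek h S ek α hSek X (Y 1) b
      have hv0U : RR h S X (b • ek) (Y 1) ∈ U := by
        rw [hv0]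
        exact sub_mem (Submodule.smul_mem _ _ (hSU X hX)) (Submodule.smul_mem _ _ hUek)
      have hv0h : h ek (RR h S X (b • ek) (Y 1)) = b * h ek (Y 1) * (α * h ek X) := by
        rw [hv0]
        simp [hkk, hhS X hX]
      have f0 : Rpow h S ω (q + 1) ((lst ek Y c W d (q + 1)).set 0
            (RR h S X (b • ek) ((lst ek Y c W d (q + 1)).getD 0 0)))
          = (c 1 * (b * h ek (Y 1) * (α * h ek X)))
            * (α * Rpow h S ω q (lst ek (fun m => Y (m + 1)) (fun m => c (m + 1)) W d q)) := by
        rw [show (lst ek Y c W d (q + 1)).set 0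
              (RR h S X (b • ek) ((lst ek Y c W d (q + 1)).getD 0 0))
            = RR h S X (b • ek) (Y 1) :: c 1 • ek ::
              lst ek (fun m => Y (m + 1)) (fun m => c (m + 1)) W d q from rfl]
        rw [cons_eval _ hv0U (c 1) _ _ W d hYs hW, hv0h]
      have f1 : Rpow h S ω (q + 1) ((lst ek Y c W d (q + 1)).set (0 + 1)
            (RR h S X (b • ek) ((lst ek Y c W d (q + 1)).getD (0 + 1) 0)))
          = (-(b * c 1 * α * h X ek) * h ek (Y 1))
            * (α * Rpow h S ω q (lst ek (fun m => Y (m + 1)) (fun m => c (m + 1)) W d q)) := by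
        rw [show (lst ek Y c W d (q + 1)).getD (0 + 1) 0 = c 1 • ek from rfl,
          RR_ek_smul h S ek α hSek hkk X b (c 1)]
        rw [show (lst ek Y c W d (q + 1)).set (0 + 1) ((-(b * c 1 * α * h X ek)) • ek)
            = Y 1 :: (-(b * c 1 * α * h X ek)) • ek ::
              lst ek (fun m => Y (m + 1)) (fun m => c (m + 1)) W d q from rfl]
        rw [cons_eval (Y 1) (hY 1 le_rfl (by omega)) (-(b * c 1 * α * h X ek)) _ _ W d hYs hW]
      have fmid : ∀ j ∈ Finset.range (2 * q + 2),
          Rpow h S ω (q + 1) ((lst ek Y c W d (q + 1)).set (j + 1 + 1)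
            (RR h S X (b • ek) ((lst ek Y c W d (q + 1)).getD (j + 1 + 1) 0)))
          = (c 1 * h ek (Y 1)) * (α * Rpow h S ω q
              ((lst ek (fun m => Y (m + 1)) (fun m => c (m + 1)) W d q).set j
                (RR h S X (b • ek)
                  ((lst ek (fun m => Y (m + 1)) (fun m => c (m + 1)) W d q).getD j 0)))) := by
        intro j hj
        obtain ⟨Y', c', W', d', hY', hW', heq⟩ :=
          slot h S ek α U hUek hSU hkk hSek q (fun m => Y (m + 1)) (fun m => c (m + 1)) W d
            hYs hW X hX b j (Finset.mem_range.mp hj)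
        rw [show (lst ek Y c W d (q + 1)).set (j + 1 + 1)
              (RR h S X (b • ek) ((lst ek Y c W d (q + 1)).getD (j + 1 + 1) 0))
            = Y 1 :: c 1 • ek ::
              (lst ek (fun m => Y (m + 1)) (fun m => c (m + 1)) W d q).set j
                (RR h S X (b • ek)
                  ((lst ek (fun m => Y (m + 1)) (fun m => c (m + 1)) W d q).getD j 0)) from rfl]
        rw [heq, cons_eval (Y 1) (hY 1 le_rfl (by omega)) (c 1) Y' c' W' d' hY' hW']
      rw [Finset.sum_congr rfl fmid, f0, f1, ← Finset.mul_sum, ← Finset.mul_sum]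
      rw [IHsum (fun m => Y (m + 1)) (fun m => c (m + 1)) W d hYs hW X hX b]
      rw [IHkey (fun m => Y (m + 1)) (fun m => c (m + 1)) W d hYs hW]
      rw [Kv_succ, hsymm X ek]
      ring

end Main4

theorem stmt5
    {V : Type*} [AddCommGroup V] [Module ℝ V]
    (n : ℕ) (hn : 2 ≤ n) (e : ℕ → V)
    (hbasis : ∃ b : Module.Basis (Fin (2 * n)) ℝ V, ∀ i : Fin (2 * n), b i = e (i.1 + 1))
    (h ω : V →ₗ[ℝ] V →ₗ[ℝ] ℝ)
    (hsymm : ∀ X Y, h X Y = h Y X)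
    (halt : ∀ X, ω X X = 0)
    (S : V →ₗ[ℝ] V)
    (k : ℕ) (hk2 : 2 ≤ k) (hk : k ≤ 2 * n)
    (α ε : ℝ) (hε : ε = 1 ∨ ε = -1)
    (hS1 : ∀ i, 1 ≤ i → i ≤ k - 1 → S (e i) = α • e i + e (i + 1))
    (hS2 : S (e k) = α • e k)
    (hh1 : ∀ i j, 1 ≤ i → i ≤ k → 1 ≤ j → j ≤ k → i + j = k + 1 → h (e i) (e j) = ε)
    (hh0 : ∀ i j, 1 ≤ i → i ≤ 2 * n → 1 ≤ j → j ≤ 2 * n → min i j ≤ k →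
      ¬(i ≤ k ∧ j ≤ k ∧ i + j = k + 1) → h (e i) (e j) = 0)
    (p : ℕ) (hp : 1 ≤ p)
    (X : ℕ → V) (lam : ℕ → ℕ → ℝ)
    (hX : ∀ m, 1 ≤ m → m ≤ p → X m = ∑ j ∈ Finset.Icc 1 k, lam m j • e j)
    (i : ℕ) (hi2 : 2 ≤ i) (hi : i ≤ 2 * n) :
    Rpow h S ω p (interleave X (e k) p ++ [e i, e k]) =
      (∏ m ∈ Finset.Icc 1 p, lam m 1) * ε ^ p * α ^ p * ω (e i) (e k) := by
  -- span of e 1, ..., e k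
  set U : Submodule ℝ V := Submodule.span ℝ (e '' Set.Icc 1 k) with hU
  have hUj : ∀ j, 1 ≤ j → j ≤ k → e j ∈ U := fun j h1 h2 =>
    Submodule.subset_span ⟨j, ⟨h1, h2⟩, rfl⟩
  have hUek : e k ∈ U := hUj k (by omega) le_rfl
  -- h (e k) (e j) values
  have hek1 : h (e k) (e 1) = ε := hh1 k 1 (by omega) le_rfl le_rfl (by omega) (by omega)
  have hek0 : ∀ j, 2 ≤ j → j ≤ 2 * n → h (e k) (e j) = 0 := fun j h1 h2 =>
    hh0 k j (by omega) hk (by omega) h2 (min_le_left _ _) (by omega)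
  have hkk : h (e k) (e k) = 0 := hek0 k hk2 hk
  -- S maps U to U
  have hSU : ∀ u ∈ U, S u ∈ U := by
    intro u hu
    induction hu using Submodule.span_induction with
    | mem v hv =>
      obtain ⟨j, ⟨h1, h2⟩, rfl⟩ := hv
      by_cases hj : j = k
      · subst hj; rw [hS2]; exact Submodule.smul_mem _ _ hUek
      · rw [hS1 j h1 (by omega)]
        exact add_mem (Submodule.smul_mem _ _ (hUj j h1 h2)) (hUj (j + 1) (by omega) (by omega))
    | zero => simp
    | add u v _ _ hu hv => rw [map_add]; exact add_mem hu hv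
    | smul a u _ hu => rw [map_smul]; exact Submodule.smul_mem _ _ hu
  -- h (e k) (S u) = α * h (e k) u on U
  have hhS : ∀ u ∈ U, h (e k) (S u) = α * h (e k) u := by
    intro u hu
    induction hu using Submodule.span_induction with
    | mem v hv =>
      obtain ⟨j, ⟨h1, h2⟩, rfl⟩ := hv
      by_cases hj : j = k
      · subst hj; rw [hS2]; simp
      · rw [hS1 j h1 (by omega)]
        rw [map_add, map_smul, hek0 (j + 1) (by omega) (by omega)]
        simp
    | zero => simp
    | add u v _ _ hu hv => simp only [map_add, hu, hv]; ring
    | smul a u _ hu => simp only [map_smul, smul_eq_mul, hu]; ring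
  -- the X's
  have hXU : ∀ m, 1 ≤ m → m ≤ p → X m ∈ U := by
    intro m h1 h2
    rw [hX m h1 h2]
    exact Submodule.sum_mem _ fun j hj => by
      rw [Finset.mem_Icc] at hj
      exact Submodule.smul_mem _ _ (hUj j hj.1 hj.2)
  have hXh : ∀ m, 1 ≤ m → m ≤ p → h (e k) (X m) = ε * lam m 1 := by
    intro m h1 h2
    rw [hX m h1 h2, map_sum]
    rw [Finset.sum_eq_single 1]
    · rw [map_smul, smul_eq_mul, hek1]; ring
    · intro j hj hj1
      rw [Finset.mem_Icc] at hj
      rw [map_smul, smul_eq_mul, hek0 j (by omega) (by omega)]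
      ring
    · intro hmem
      exfalso; exact hmem (Finset.mem_Icc.mpr ⟨le_rfl, by omega⟩)
  have hW : h (e k) (e i) = 0 := hek0 i hi2 hi
  -- apply the key lemma
  rw [interleave_lst p X (e k) (e i)]
  rw [(key_sum h ω S (e k) α U hsymm (halt (e k)) hUek hSU hhS hkk hS2 p).1
    X (fun _ => 1) (e i) 1 hXU hW]
  -- compute Kv
  rw [Kv]
  have hprod : (∏ m ∈ Finset.range p, ((1 : ℝ) * h (e k) (X (m + 1))))
      = ∏ m ∈ Finset.range p, (ε * lam (m + 1) 1) := by
    refine Finset.prod_congr rfl fun m hm => ?_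
    rw [Finset.mem_range] at hm
    rw [one_mul, hXh (m + 1) (by omega) (by omega)]
  rw [hprod, Finset.prod_mul_distrib, Finset.prod_const]
  have hIcc : (∏ m ∈ Finset.Icc 1 p, lam m 1) = ∏ m ∈ Finset.range p, lam (m + 1) 1 := by
    rw [← Finset.Ico_add_one_right_eq_Icc, Finset.prod_Ico_eq_prod_range]
    simp [add_comm]
  rw [hIcc, Finset.card_range]
  ring
end
end

section
/- Let p ≥ 1 and k ≥ 2. Then for every i with 2 ≤ i ≤ 2n: (R^p·ω)(e_1, e_k, e_1, e_k, …, e_1, e_k, e_i, e_k) (with p leading pairs (e_1, e_k) followed by e_i, e_k) equals ε^p α^p ω(e_i, e_k). -/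
noncomputable section

section Aux
variable {V : Type*} [AddCommGroup V] [Module ℝ V]
  (h : V →ₗ[ℝ] V →ₗ[ℝ] ℝ) (S : V →ₗ[ℝ] V) (ω : V →ₗ[ℝ] V →ₗ[ℝ] ℝ)

lemma Rpow_zero (l : List V) : Rpow h S ω 0 l = ω (l.getD 0 0) (l.getD 1 0) := rfl

lemma Rpow_succ_s6 (q : ℕ) (X Y : V) (Zs : List V) :
    Rpow h S ω (q+1) (X :: Y :: Zs) =
      -∑ j ∈ Finset.range Zs.length,
        Rpow h S ω q (Zs.set j (RR h S X Y (Zs.getD j 0))) := by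
  rw [Rpow, Function.iterate_succ_apply']
  rfl

lemma RR_eq (X Y z : V) : RR h S X Y z = (h Y z) • S X + (-(h X z)) • S Y := by
  rw [RR, sub_eq_add_neg, neg_smul]

lemma RR_lin1 (a b : ℝ) (x y Y z : V) :
    RR h S (a • x + b • y) Y z = a • RR h S x Y z + b • RR h S y Y z := by
  simp only [RR, map_add, map_smul, LinearMap.add_apply, LinearMap.smul_apply, smul_eq_mul]
  module

lemma RR_lin2 (a b : ℝ) (x y X z : V) :
    RR h S X (a • x + b • y) z = a • RR h S X x z + b • RR h S X y z := by
  simp only [RR, map_add, map_smul, LinearMap.add_apply, LinearMap.smul_apply, smul_eq_mul]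
  module

lemma RR_lin3 (a b : ℝ) (x y X Y : V) :
    RR h S X Y (a • x + b • y) = a • RR h S X Y x + b • RR h S X Y y := by
  simp only [RR, map_add, map_smul, smul_eq_mul]
  module

lemma getD_set_self {α : Type*} [Inhabited α] (l : List α) (n : ℕ) (hn : n < l.length) (a : α) :
    (l.set n a).getD n default = a := by
  rw [List.getD_eq_getElem _ _ (by simpa using hn)]
  simp

lemma getD_set_ne {α : Type*} [Inhabited α] (l : List α) {n m : ℕ} (hnm : n ≠ m) (a : α) :
    (l.set n a).getD m default = l.getD m default := by
  rcases Nat.lt_or_ge m l.length with hm | hm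
  · rw [List.getD_eq_getElem _ _ (by simpa using hm), List.getD_eq_getElem _ _ hm]
    exact List.getElem_set_ne hnm _
  · rw [List.getD_eq_default _ _ (by simpa using hm), List.getD_eq_default _ _ hm]

end Aux

section Lin
variable {V : Type*} [AddCommGroup V] [Module ℝ V]
  (h : V →ₗ[ℝ] V →ₗ[ℝ] ℝ) (S : V →ₗ[ℝ] V) (ω : V →ₗ[ℝ] V →ₗ[ℝ] ℝ)

lemma getD_set_self' {α : Type*} (l : List α) (n : ℕ) (hn : n < l.length) (a d : α) :
    (l.set n a).getD n d = a := by
  rw [List.getD_eq_getElem _ _ (by simpa using hn)]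
  simp

lemma getD_set_ne' {α : Type*} (l : List α) {n m : ℕ} (hnm : n ≠ m) (a d : α) :
    (l.set n a).getD m d = l.getD m d := by
  rcases Nat.lt_or_ge m l.length with hm | hm
  · rw [List.getD_eq_getElem _ _ (by simpa using hm), List.getD_eq_getElem _ _ hm]
    exact List.getElem_set_ne hnm _
  · rw [List.getD_eq_default _ _ (by simpa using hm), List.getD_eq_default _ _ hm]

lemma Rpow_set_lin :
    ∀ (q : ℕ) (L : List V), L.length = 2*q+2 → ∀ j, j < L.length →
    ∀ (a b : ℝ) (x y : V),
    Rpow h S ω q (L.set j (a • x + b • y)) =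
      a * Rpow h S ω q (L.set j x) + b * Rpow h S ω q (L.set j y) := by
  intro q
  induction q with
  | zero =>
    intro L hL j hj a b x y
    obtain ⟨u, v, rfl⟩ : ∃ u v, L = [u, v] := by
      rcases L with _ | ⟨u, L⟩; · simp at hL
      rcases L with _ | ⟨v, L⟩; · simp at hL
      rcases L with _ | ⟨w, L⟩
      · exact ⟨u, v, rfl⟩
      · simp at hL
    simp only [List.length_cons, List.length_nil] at hj
    interval_cases j <;>
      simp [Rpow_zero, map_add, map_smul, LinearMap.add_apply, LinearMap.smul_apply,
        smul_eq_mul]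
  | succ q ih =>
    intro L hL j hj a b x y
    obtain ⟨X, Y, Zs, rfl⟩ : ∃ X Y Zs, L = X :: Y :: Zs := by
      rcases L with _ | ⟨X, L⟩; · simp at hL
      rcases L with _ | ⟨Y, L⟩; · simp at hL
      exact ⟨X, Y, L, rfl⟩
    have hZs : Zs.length = 2*q+2 := by simp at hL; omega
    rcases j with _ | j
    · rw [List.set_cons_zero, List.set_cons_zero, List.set_cons_zero,
        Rpow_succ_s6, Rpow_succ_s6, Rpow_succ_s6, mul_neg, mul_neg, Finset.mul_sum, Finset.mul_sum,
        ← neg_add, ← Finset.sum_add_distrib]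
      congr 1
      refine Finset.sum_congr rfl fun t ht => ?_
      rw [RR_lin1]
      exact ih Zs hZs t (Finset.mem_range.mp ht) a b _ _
    rcases j with _ | j
    · rw [List.set_cons_succ, List.set_cons_succ, List.set_cons_succ,
        List.set_cons_zero, List.set_cons_zero, List.set_cons_zero,
        Rpow_succ_s6, Rpow_succ_s6, Rpow_succ_s6, mul_neg, mul_neg, Finset.mul_sum, Finset.mul_sum,
        ← neg_add, ← Finset.sum_add_distrib]
      congr 1
      refine Finset.sum_congr rfl fun t ht => ?_
      rw [RR_lin2]
      exact ih Zs hZs t (Finset.mem_range.mp ht) a b _ _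
    · have hj' : j < Zs.length := by simp at hj; omega
      simp only [List.set_cons_succ]
      rw [Rpow_succ_s6, Rpow_succ_s6, Rpow_succ_s6]
      simp only [List.length_set]
      rw [mul_neg, mul_neg, Finset.mul_sum, Finset.mul_sum, ← neg_add,
        ← Finset.sum_add_distrib]
      congr 1
      refine Finset.sum_congr rfl fun t ht => ?_
      have ht' : t < Zs.length := Finset.mem_range.mp ht
      by_cases hte : t = j
      · subst hte
        rw [getD_set_self' _ _ ht', getD_set_self' _ _ ht', getD_set_self' _ _ ht',
          List.set_set, List.set_set, List.set_set, RR_lin3]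
        exact ih Zs hZs t ht' a b _ _
      · have hne : j ≠ t := fun hh => hte hh.symm
        rw [getD_set_ne' _ hne, getD_set_ne' _ hne, getD_set_ne' _ hne,
          List.set_comm _ _ hne, List.set_comm _ _ hne, List.set_comm _ _ hne]
        exact ih (Zs.set t _) (by simp [hZs]) j (by simpa using hj') a b x y

lemma Rpow_set_smul (q : ℕ) (L : List V) (hL : L.length = 2*q+2) (j : ℕ)
    (hj : j < L.length) (c : ℝ) (x : V) :
    Rpow h S ω q (L.set j (c • x)) = c * Rpow h S ω q (L.set j x) := by
  have := Rpow_set_lin h S ω q L hL j hj c 0 x 0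
  simpa using this

lemma Rpow_set_add_smul (q : ℕ) (L : List V) (hL : L.length = 2*q+2) (j : ℕ)
    (hj : j < L.length) (c : ℝ) (x y : V) :
    Rpow h S ω q (L.set j (c • x + y)) =
      c * Rpow h S ω q (L.set j x) + Rpow h S ω q (L.set j y) := by
  have := Rpow_set_lin h S ω q L hL j hj c 1 x y
  simpa using this

end Lin

section glstsec
variable {V : Type*} [AddCommGroup V] [Module ℝ V]

def glst (e : ℕ → V) (k : ℕ) : List ℕ → ℕ → List V
  | [], i => [e i, e k]
  | m :: ms, i => e m :: e k :: glst e k ms i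

variable (e : ℕ → V) (k : ℕ)

lemma glst_length : ∀ (ms : List ℕ) (i : ℕ), (glst e k ms i).length = 2*ms.length+2
  | [], i => rfl
  | m :: ms, i => by simp [glst, glst_length ms i]; ring

lemma glst_getD_even : ∀ (ms : List ℕ) (t i : ℕ), t < ms.length →
    (glst e k ms i).getD (2*t) 0 = e (ms.getD t 1)
  | [], t, i, ht => absurd ht (by simp)
  | m :: ms, 0, i, _ => rfl
  | m :: ms, t+1, i, ht => by
    have h2 : 2*(t+1) = (2*t)+1+1 := by ring
    rw [h2]
    show (e m :: e k :: glst e k ms i).getD _ 0 = _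
    rw [List.getD_cons_succ, List.getD_cons_succ]
    exact glst_getD_even ms t i (by simpa using ht)

lemma glst_getD_odd : ∀ (ms : List ℕ) (t i : ℕ), t ≤ ms.length →
    (glst e k ms i).getD (2*t+1) 0 = e k
  | [], 0, i, _ => rfl
  | [], t+1, i, ht => absurd ht (by simp)
  | m :: ms, 0, i, _ => rfl
  | m :: ms, t+1, i, ht => by
    have h2 : 2*(t+1)+1 = ((2*t)+1)+1+1 := by ring
    rw [h2]
    show (e m :: e k :: glst e k ms i).getD _ 0 = _
    rw [List.getD_cons_succ, List.getD_cons_succ]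
    exact glst_getD_odd ms t i (by simpa using ht)

lemma glst_getD_last : ∀ (ms : List ℕ) (i : ℕ), (glst e k ms i).getD (2*ms.length) 0 = e i
  | [], i => rfl
  | m :: ms, i => by
    have h2 : 2*(m :: ms).length = (2*ms.length)+1+1 := by simp [Nat.mul_succ]
    rw [h2]
    show (e m :: e k :: glst e k ms i).getD _ 0 = _
    rw [List.getD_cons_succ, List.getD_cons_succ]
    exact glst_getD_last ms i

lemma glst_set_even : ∀ (ms : List ℕ) (t i a : ℕ), t < ms.length →
    (glst e k ms i).set (2*t) (e a) = glst e k (ms.set t a) i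
  | [], t, i, a, ht => absurd ht (by simp)
  | m :: ms, 0, i, a, _ => rfl
  | m :: ms, t+1, i, a, ht => by
    have h2 : 2*(t+1) = (2*t)+1+1 := by ring
    rw [h2]
    show (e m :: e k :: glst e k ms i).set _ _ = _
    rw [List.set_cons_succ, List.set_cons_succ]
    rw [glst_set_even ms t i a (by simpa using ht)]
    rfl

lemma glst_set_odd : ∀ (ms : List ℕ) (t i : ℕ), t ≤ ms.length →
    (glst e k ms i).set (2*t+1) (e k) = glst e k ms i
  | [], 0, i, _ => rfl
  | [], t+1, i, ht => absurd ht (by simp)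
  | m :: ms, 0, i, _ => rfl
  | m :: ms, t+1, i, ht => by
    have h2 : 2*(t+1)+1 = ((2*t)+1)+1+1 := by ring
    rw [h2]
    show (e m :: e k :: glst e k ms i).set _ _ = _
    rw [List.set_cons_succ, List.set_cons_succ]
    rw [glst_set_odd ms t i (by simpa using ht)]
    rfl

lemma glst_set_last : ∀ (ms : List ℕ) (i a : ℕ),
    (glst e k ms i).set (2*ms.length) (e a) = glst e k ms a
  | [], i, a => rfl
  | m :: ms, i, a => by
    have h2 : 2*(m :: ms).length = (2*ms.length)+1+1 := by simp [Nat.mul_succ]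
    rw [h2]
    show (e m :: e k :: glst e k ms i).set _ _ = _
    rw [List.set_cons_succ, List.set_cons_succ]
    rw [glst_set_last ms i a]
    rfl

lemma sum_pair_split (F : ℕ → ℝ) (m : ℕ) :
    ∑ j ∈ Finset.range (2*m), F j = ∑ t ∈ Finset.range m, (F (2*t) + F (2*t+1)) := by
  induction m with
  | zero => simp
  | succ m ih =>
    rw [Nat.mul_succ, Finset.sum_range_succ, Finset.sum_range_succ, Finset.sum_range_succ, ← ih]
    ring

end glstsec

lemma list_set_getD (l : List ℕ) (n : ℕ) (hn : n < l.length) (h1 : l.getD n 1 = 1) :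
    l.set n 1 = l := by
  rw [List.getD_eq_getElem _ _ hn] at h1
  rw [← h1]
  apply List.ext_getElem (by simp)
  intro j hj1 hj2
  rw [List.getElem_set]
  split <;> simp_all

lemma getD_mem (l : List ℕ) (n : ℕ) (hn : n < l.length) : l.getD n 1 ∈ l := by
  rw [List.getD_eq_getElem _ _ hn]
  exact List.getElem_mem hn

lemma key {V : Type*} [AddCommGroup V] [Module ℝ V]
    (n : ℕ) (e : ℕ → V) (h ω : V →ₗ[ℝ] V →ₗ[ℝ] ℝ)
    (halt : ∀ X, ω X X = 0) (S : V →ₗ[ℝ] V)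
    (k : ℕ) (hk2 : 2 ≤ k) (hk : k ≤ 2 * n)
    (α ε : ℝ)
    (hS1 : ∀ i, 1 ≤ i → i ≤ k - 1 → S (e i) = α • e i + e (i + 1))
    (hS2 : S (e k) = α • e k)
    (hh1 : ∀ i j, 1 ≤ i → i ≤ k → 1 ≤ j → j ≤ k → i + j = k + 1 → h (e i) (e j) = ε)
    (hh0 : ∀ i j, 1 ≤ i → i ≤ 2 * n → 1 ≤ j → j ≤ 2 * n → min i j ≤ k →
      ¬(i ≤ k ∧ j ≤ k ∧ i + j = k + 1) → h (e i) (e j) = 0) :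
    ∀ (q : ℕ) (ms : List ℕ), ms.length = q → (∀ m ∈ ms, 1 ≤ m ∧ m ≤ k) →
    ∀ i, 2 ≤ i → i ≤ 2 * n →
    Rpow h S ω q (glst e k ms i) =
      if (∀ m ∈ ms, m = 1) then (ε*α)^q * ω (e i) (e k) else 0 := by
  have hek : ∀ a, 1 ≤ a → a ≤ 2*n → h (e k) (e a) = if a = 1 then ε else 0 := by
    intro a h1 h2
    split
    · next ha => subst ha; exact hh1 k 1 (by omega) le_rfl le_rfl (by omega) (by omega)
    · next ha => exact hh0 k a (by omega) (by omega) h1 h2 (by omega) (by omega)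
  have hem : ∀ m a, 1 ≤ m → m ≤ k → 1 ≤ a → a ≤ 2*n →
      h (e m) (e a) = if m + a = k+1 then ε else 0 := by
    intro m a h1 h2 h3 h4
    split
    · next hc => exact hh1 m a h1 h2 h3 (by omega) hc
    · next hc => exact hh0 m a h1 (by omega) h3 h4 (by omega) (by omega)
  intro q
  induction q with
  | zero =>
    intro ms hlen hbd i hi2 hi
    have hnil : ms = [] := List.length_eq_zero_iff.mp hlen
    subst hnil
    simp [glst, Rpow_zero]
  | succ q ih =>
    intro ms hlen hbd i hi2 hi
    obtain ⟨m, ms', rfl⟩ : ∃ m ms', ms = m :: ms' := by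
      cases ms with
      | nil => simp at hlen
      | cons a l => exact ⟨a, l, rfl⟩
    have hlen' : ms'.length = q := by simpa using hlen
    obtain ⟨hm1, hmk⟩ := hbd m (by simp)
    have hbd' : ∀ m' ∈ ms', 1 ≤ m' ∧ m' ≤ k := fun m' hm' => hbd m' (by simp [hm'])
    have hZlen : (glst e k ms' i).length = 2*q+2 := by rw [glst_length, hlen']
    have hglcons : glst e k (m :: ms') i = e m :: e k :: glst e k ms' i := rfl
    rw [hglcons, Rpow_succ_s6, hZlen]
    have h22 : 2*q+2 = 2*(q+1) := by ring
    rw [h22, sum_pair_split, Finset.sum_range_succ]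
    -- per-slot generic computation
    have hslot : ∀ j, j < 2*q+2 → ∀ c, 1 ≤ c → c ≤ 2*n →
        (glst e k ms' i).getD j 0 = e c →
        Rpow h S ω q ((glst e k ms' i).set j
            (RR h S (e m) (e k) ((glst e k ms' i).getD j 0))) =
          (if c = 1 then ε else 0) *
              Rpow h S ω q ((glst e k ms' i).set j (S (e m)))
            + (-(if m + c = k+1 then ε else 0)) *
              (α * Rpow h S ω q ((glst e k ms' i).set j (e k))) := by
      intro j hj c h1 h2 hzc
      have hj' : j < (glst e k ms' i).length := by omega
      rw [hzc, RR_eq, hek c h1 h2, hem m c hm1 hmk h1 h2,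
        Rpow_set_lin h S ω q _ hZlen j hj', hS2,
        Rpow_set_smul h S ω q _ hZlen j hj']
    have hSm : ∀ j, j < 2*q+2 →
        Rpow h S ω q ((glst e k ms' i).set j (S (e m))) =
          if m = k then α * Rpow h S ω q ((glst e k ms' i).set j (e k))
          else α * Rpow h S ω q ((glst e k ms' i).set j (e m))
            + Rpow h S ω q ((glst e k ms' i).set j (e (m+1))) := by
      intro j hj
      have hj' : j < (glst e k ms' i).length := by omega
      by_cases hmk' : m = k
      · rw [if_pos hmk', hmk', hS2, Rpow_set_smul h S ω q _ hZlen j hj']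
      · rw [if_neg hmk', hS1 m hm1 (by omega),
          Rpow_set_add_smul h S ω q _ hZlen j hj']
    -- evaluated subvalues
    have hval0 : ∀ t, t < q → ∀ a, 2 ≤ a → a ≤ k →
        Rpow h S ω q (glst e k (ms'.set t a) i) = 0 := by
      intro t ht a ha2 hak
      rw [ih (ms'.set t a) (by simp [hlen'])
        (fun x hx => by
          rcases List.mem_or_eq_of_mem_set hx with hx' | rfl
          · exact hbd' x hx'
          · exact ⟨by omega, hak⟩) i hi2 hi, if_neg]
      intro hall
      have hmem : a ∈ ms'.set t a := List.mem_set (l := ms') (i := t) (by omega) a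
      have := hall a hmem
      omega
    have hvalZk : Rpow h S ω q (glst e k ms' k) = 0 := by
      rw [ih ms' hlen' hbd' k hk2 hk]
      split
      · rw [halt (e k), mul_zero]
      · rfl
    have hvalZ : Rpow h S ω q (glst e k ms' i) =
        if (∀ x ∈ ms', x = 1) then (ε*α)^q * ω (e i) (e k) else 0 :=
      ih ms' hlen' hbd' i hi2 hi
    -- odd slots
    have hodd : ∀ t, t ≤ q →
        Rpow h S ω q ((glst e k ms' i).set (2*t+1)
            (RR h S (e m) (e k) ((glst e k ms' i).getD (2*t+1) 0))) =
          -((if m + k = k+1 then ε else 0) * (α * Rpow h S ω q (glst e k ms' i))) := by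
      intro t ht
      have hz : (glst e k ms' i).getD (2*t+1) 0 = e k :=
        glst_getD_odd e k ms' t i (by omega)
      rw [hslot (2*t+1) (by omega) k (by omega) hk hz, if_neg (by omega),
        glst_set_odd e k ms' t i (by omega)]
      ring
    -- last even slot
    have hlast : Rpow h S ω q ((glst e k ms' i).set (2*q)
          (RR h S (e m) (e k) ((glst e k ms' i).getD (2*q) 0))) = 0 := by
      have hz : (glst e k ms' i).getD (2*q) 0 = e i := by
        have := glst_getD_last e k ms' i
        rwa [hlen'] at this
      have hset : (glst e k ms' i).set (2*q) (e k) = glst e k ms' k := by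
        have := glst_set_last e k ms' i k
        rwa [hlen'] at this
      rw [hslot (2*q) (by omega) i (by omega) hi hz, if_neg (by omega), hset, hvalZk]
      ring
    by_cases hall : m = 1 ∧ ∀ x ∈ ms', x = 1
    · obtain ⟨hm, hall'⟩ := hall
      subst hm
      rw [if_pos (by
        intro x hx
        rcases List.mem_cons.mp hx with rfl | hx'
        · rfl
        · exact hall' x hx')]
      have hZval : Rpow h S ω q (glst e k ms' i) = (ε*α)^q * ω (e i) (e k) := by
        rw [hvalZ, if_pos hall']
      have hFe : ∀ t, t < q →
          Rpow h S ω q ((glst e k ms' i).set (2*t)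
              (RR h S (e 1) (e k) ((glst e k ms' i).getD (2*t) 0))) =
            ε * (α * ((ε*α)^q * ω (e i) (e k))) := by
        intro t ht
        have htl : t < ms'.length := by omega
        have hmt : ms'.getD t 1 = 1 := hall' _ (getD_mem ms' t htl)
        have hz : (glst e k ms' i).getD (2*t) 0 = e 1 := by
          rw [glst_getD_even e k ms' t i htl, hmt]
        rw [hslot (2*t) (by omega) 1 le_rfl (by omega) hz, hSm (2*t) (by omega),
          if_pos rfl, if_neg (show ¬(1 = k) by omega),
          if_neg (show ¬(1+1 = k+1) by omega),
          glst_set_even e k ms' t i 1 htl, glst_set_even e k ms' t i 2 htl,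
          list_set_getD ms' t htl hmt, hZval,
          hval0 t ht 2 le_rfl hk2]
        ring
      have hsum : ∑ t ∈ Finset.range q,
          (Rpow h S ω q ((glst e k ms' i).set (2*t)
              (RR h S (e 1) (e k) ((glst e k ms' i).getD (2*t) 0)))
           + Rpow h S ω q ((glst e k ms' i).set (2*t+1)
              (RR h S (e 1) (e k) ((glst e k ms' i).getD (2*t+1) 0)))) = 0 := by
        apply Finset.sum_eq_zero
        intro t ht
        have ht' : t < q := Finset.mem_range.mp ht
        rw [hFe t ht', hodd t (le_of_lt ht'), if_pos (by omega), hZval]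
        ring
      rw [hsum, hlast, hodd q le_rfl, if_pos (by omega), hZval]
      ring
    · rw [if_neg (by
        intro hc
        exact hall ⟨hc m (by simp), fun x hx => hc x (by simp [hx])⟩)]
      have hZ0 : m = 1 → Rpow h S ω q (glst e k ms' i) = 0 := by
        intro hm
        rw [hvalZ, if_neg (fun hc => hall ⟨hm, hc⟩)]
      have hFo : ∀ t, t ≤ q →
          Rpow h S ω q ((glst e k ms' i).set (2*t+1)
              (RR h S (e m) (e k) ((glst e k ms' i).getD (2*t+1) 0))) = 0 := by
        intro t ht
        rw [hodd t ht]
        by_cases hm : m = 1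
        · rw [hZ0 hm]; ring
        · rw [if_neg (by omega)]; ring
      have hFe : ∀ t, t < q →
          Rpow h S ω q ((glst e k ms' i).set (2*t)
              (RR h S (e m) (e k) ((glst e k ms' i).getD (2*t) 0))) = 0 := by
        intro t ht
        have htl : t < ms'.length := by omega
        set mt := ms'.getD t 1 with hmtdef
        obtain ⟨hmt1, hmtk⟩ := hbd' mt (getD_mem ms' t htl)
        have hz : (glst e k ms' i).getD (2*t) 0 = e mt := by
          rw [glst_getD_even e k ms' t i htl]
        rw [hslot (2*t) (by omega) mt (by omega) (by omega) hz, hSm (2*t) (by omega),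
          glst_set_even e k ms' t i k htl, hval0 t ht k hk2 le_rfl]
        by_cases hmt : mt = 1
        · rw [if_pos hmt]
          by_cases hmk' : m = k
          · rw [if_pos hmk']
            ring
          · rw [if_neg hmk', glst_set_even e k ms' t i m htl,
              glst_set_even e k ms' t i (m+1) htl,
              hval0 t ht (m+1) (by omega) (by omega)]
            by_cases hm : m = 1
            · subst hm
              rw [list_set_getD ms' t htl (by rw [← hmtdef]; exact hmt), hZ0 rfl]
              ring
            · rw [hval0 t ht m (by omega) hmk]
              ring
        · rw [if_neg hmt]
          ring
      have hsum : ∑ t ∈ Finset.range q,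
          (Rpow h S ω q ((glst e k ms' i).set (2*t)
              (RR h S (e m) (e k) ((glst e k ms' i).getD (2*t) 0)))
           + Rpow h S ω q ((glst e k ms' i).set (2*t+1)
              (RR h S (e m) (e k) ((glst e k ms' i).getD (2*t+1) 0)))) = 0 := by
        apply Finset.sum_eq_zero
        intro t ht
        have ht' : t < q := Finset.mem_range.mp ht
        rw [hFe t ht', hFo t (le_of_lt ht')]
        ring
      rw [hsum, hlast, hFo q le_rfl]
      ring

lemma pairList_glst {V : Type*} [AddCommGroup V] [Module ℝ V] (e : ℕ → V) (k : ℕ) :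
    ∀ (p i : ℕ), pairList (e 1) (e k) p ++ [e i, e k] = glst e k (List.replicate p 1) i
  | 0, i => rfl
  | p+1, i => by
    show e 1 :: e k :: (pairList (e 1) (e k) p ++ [e i, e k]) = _
    rw [pairList_glst e k p i]
    rfl

theorem stmt6
    {V : Type*} [AddCommGroup V] [Module ℝ V]
    (n : ℕ) (hn : 2 ≤ n) (e : ℕ → V)
    (hbasis : ∃ b : Module.Basis (Fin (2 * n)) ℝ V, ∀ i : Fin (2 * n), b i = e (i.1 + 1))
    (h ω : V →ₗ[ℝ] V →ₗ[ℝ] ℝ)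
    (hsymm : ∀ X Y, h X Y = h Y X)
    (halt : ∀ X, ω X X = 0)
    (S : V →ₗ[ℝ] V)
    (k : ℕ) (hk2 : 2 ≤ k) (hk : k ≤ 2 * n)
    (α ε : ℝ) (hε : ε = 1 ∨ ε = -1)
    (hS1 : ∀ i, 1 ≤ i → i ≤ k - 1 → S (e i) = α • e i + e (i + 1))
    (hS2 : S (e k) = α • e k)
    (hh1 : ∀ i j, 1 ≤ i → i ≤ k → 1 ≤ j → j ≤ k → i + j = k + 1 → h (e i) (e j) = ε)
    (hh0 : ∀ i j, 1 ≤ i → i ≤ 2 * n → 1 ≤ j → j ≤ 2 * n → min i j ≤ k →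
      ¬(i ≤ k ∧ j ≤ k ∧ i + j = k + 1) → h (e i) (e j) = 0)
    (p : ℕ) (hp : 1 ≤ p)
    (i : ℕ) (hi2 : 2 ≤ i) (hi : i ≤ 2 * n) :
    Rpow h S ω p (pairList (e 1) (e k) p ++ [e i, e k]) =
      ε ^ p * α ^ p * ω (e i) (e k) := by
  rw [pairList_glst e k p i,
    key n e h ω halt S k hk2 hk α ε hS1 hS2 hh1 hh0 p (List.replicate p 1) (by simp)
      (fun m hm => by rw [List.eq_of_mem_replicate hm]; exact ⟨le_rfl, by omega⟩) i hi2 hi,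
    if_pos (fun m hm => List.eq_of_mem_replicate hm), mul_pow]
end
end
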